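/- Let m ≥ 1 and n ≥ 0 be integers. Then, as an identity of rational numbers, m / (m! · n!) = Σ_{ℓ=1}^{m} (n − m + 2ℓ) / ((m−ℓ)! · (n+ℓ)!). -/

import Mathlib

open Finset

lemma aux16 (p q A B : ℚ) (hA : A ≠ 0) (hB : B ≠ 0) (hp : p + 1 ≠ 0) (hq : q + 1 ≠ 0) :
    (q + 1 - p) / (A * ((q + 1) * B)) = (p + 1) / ((p + 1) * A * B) - p / (A * ((q + 1) * B)) := by
  field_simp

theorem stmt16 (m n : ℕ) (hm : 1 ≤ m) :
    (m : ℚ) / ((Nat.factorial m : ℚ) * (Nat.factorial n : ℚ))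
    = ∑ ℓ ∈ Finset.Icc 1 m,
        ((n : ℚ) - (m : ℚ) + 2 * (ℓ : ℚ)) /
          ((Nat.factorial (m - ℓ) : ℚ) * (Nat.factorial (n + ℓ) : ℚ)) := by
  set f : ℕ → ℚ := fun j =>
    ((m : ℚ) - (j : ℚ)) / ((Nat.factorial (m - j) : ℚ) * (Nat.factorial (n + j) : ℚ)) with hf
  have key : ∀ i ∈ Finset.range m,
      ((n : ℚ) - (m : ℚ) + 2 * ((1 + i : ℕ) : ℚ)) /
          ((Nat.factorial (m - (1 + i)) : ℚ) * (Nat.factorial (n + (1 + i)) : ℚ))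
      = f i - f (i + 1) := by
    intro i hi
    rw [Finset.mem_range] at hi
    have h1 : 1 + i ≤ m := by omega
    have h2 : m - i = (m - (1 + i)) + 1 := by omega
    have hcast : (m : ℚ) - (i : ℚ) = ((m - i : ℕ) : ℚ) := by
      rw [Nat.cast_sub (by omega)]
    have hcast2 : (m : ℚ) - ((i + 1 : ℕ) : ℚ) = ((m - (1 + i) : ℕ) : ℚ) := by
      rw [Nat.cast_sub (by omega)]; push_cast; ring
    have hfac1 : (Nat.factorial (m - i) : ℚ)
        = ((m - (1 + i) : ℕ) + 1 : ℚ) * (Nat.factorial (m - (1 + i)) : ℚ) := by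
      rw [h2, Nat.factorial_succ]; push_cast; ring
    have hfac2 : (Nat.factorial (n + (i + 1)) : ℚ)
        = ((n + i : ℕ) + 1 : ℚ) * (Nat.factorial (n + i) : ℚ) := by
      have : n + (i + 1) = (n + i) + 1 := by omega
      rw [this, Nat.factorial_succ]; push_cast; ring
    have hi1 : n + (1 + i) = n + (i + 1) := by omega
    have e1 : (Nat.factorial (m - (1 + i)) : ℚ) ≠ 0 := by
      exact_mod_cast (Nat.factorial_pos _).ne'
    have e2 : (Nat.factorial (n + i) : ℚ) ≠ 0 := by
      exact_mod_cast (Nat.factorial_pos _).ne'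
    simp only [hf]
    rw [hi1, hcast, hcast2]
    have hmi : m - (i + 1) = m - (1 + i) := by omega
    rw [hmi, hfac1, hfac2]
    have hne : ((m - (1 + i) : ℕ) + 1 : ℚ) ≠ 0 := by positivity
    have hne2 : ((n + i : ℕ) + 1 : ℚ) ≠ 0 := by positivity
    have hval : ((m - i : ℕ) : ℚ) = ((m - (1 + i) : ℕ) : ℚ) + 1 := by
      rw [h2]; push_cast; ring
    have hmcast : ((m - (1 + i) : ℕ) : ℚ) = (m : ℚ) - 1 - i := by
      rw [Nat.cast_sub h1]; push_cast; ring
    rw [hval]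
    have hnum : (n : ℚ) - (m : ℚ) + 2 * ((1 + i : ℕ) : ℚ)
        = ((n + i : ℕ) : ℚ) + 1 - ((m - (1 + i) : ℕ) : ℚ) := by
      rw [hmcast]; push_cast; ring
    rw [hnum]
    exact aux16 _ _ _ _ e1 e2 hne hne2
  have hIcc : Finset.Icc 1 m = Finset.Ico 1 (m + 1) := by
    rw [Finset.Ico_add_one_right_eq_Icc]
  rw [hIcc, Finset.sum_Ico_eq_sum_range]
  simp only [Nat.add_sub_cancel]
  rw [Finset.sum_congr rfl key]
  rw [Finset.sum_range_sub']
  simp only [hf]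
  have : ((m : ℚ) - (m : ℚ)) = 0 := by ring
  simp [Nat.sub_self]
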